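/- Let n ≥ 2 and let e = e_1 e_2 ⋯ e_n ∈ I_n(0012) with e ≠ 0 1 ⋯ (n−1), and let γ(e) = e_1 e_2 ⋯ e_{n−1}. If last(e) ≤ srpt(γ(e)), then srpt(e) = last(e). -/

import Mathlib

/-- `e : Fin n → ℕ` is an inversion sequence: `e i ≤ i` (0-indexed). -/
def IsInvSeq {n : ℕ} (e : Fin n → ℕ) : Prop := ∀ i : Fin n, e i ≤ (i : ℕ)

/-- `e` avoids the pattern 0012: there are no indices `i < j < k < l`
with `e i = e j < e k < e l`. -/
def Avoids0012 {n : ℕ} (e : Fin n → ℕ) : Prop :=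
  ¬ ∃ i j k l : Fin n, i < j ∧ j < k ∧ k < l ∧ e i = e j ∧ e j < e k ∧ e k < e l

/-- The set `I_n(0012)` of inversion sequences of length `n` avoiding `0012`. -/
def InvSeq0012 (n : ℕ) : Set (Fin n → ℕ) := {e | IsInvSeq e ∧ Avoids0012 e}

/-- `R(e)`: the set of values appearing more than once in `e`. -/
def repeats {n : ℕ} (e : Fin n → ℕ) : Set ℕ :=
  {m | ∃ i j : Fin n, i ≠ j ∧ e i = m ∧ e j = m}

open Classical in
/-- `srpt e = min R(e)` if `R(e) ≠ ∅`, and `n - 1` otherwise. -/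
noncomputable def srpt {n : ℕ} (e : Fin n → ℕ) : ℕ :=
  if (repeats e).Nonempty then sInf (repeats e) else n - 1

/-- The last entry of `e` (and `0` for the empty sequence). -/
def lastEntry {n : ℕ} (e : Fin n → ℕ) : ℕ :=
  if h : 0 < n then e ⟨n - 1, by omega⟩ else 0

/-- `γ(e)`: the sequence `e` with its last entry removed. -/
def gammaSeq {n : ℕ} (e : Fin n → ℕ) : Fin (n - 1) → ℕ :=
  fun i => e (Fin.castLE (Nat.sub_le n 1) i)

/-- `f n k ℓ`: the number of `e ∈ I_n(0012)` with `srpt e = k` and `last e = ℓ`. -/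
noncomputable def f (n k ℓ : ℕ) : ℕ :=
  Set.ncard {e : Fin n → ℕ | e ∈ InvSeq0012 n ∧ srpt e = k ∧ lastEntry e = ℓ}

/-- For `n ≥ 2` and `e ∈ I_n(0012)` with `e ≠ 0 1 ⋯ (n-1)`:
if `last e ≤ srpt (γ e)`, then `srpt e = last e`. -/
lemma invseq_inj_eq_id {m : ℕ} (g : Fin m → ℕ) (hg : IsInvSeq g)
    (hinj : ∀ i j : Fin m, g i = g j → i = j) : ∀ i : Fin m, g i = (i : ℕ) := by
  have key : ∀ N : ℕ, ∀ i : Fin m, (i : ℕ) = N → g i = (i : ℕ) := by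
    intro N
    induction N using Nat.strong_induction_on with
    | _ N ih =>
      intro i hiN
      rcases Nat.lt_or_ge (g i) (i : ℕ) with hlt | hge
      · exfalso
        have hgi : g i < m := lt_trans hlt i.isLt
        have h1 : g ⟨g i, hgi⟩ = ((⟨g i, hgi⟩ : Fin m) : ℕ) := by
          exact ih (g i) (hiN ▸ hlt) ⟨g i, hgi⟩ rfl
        have h2 : g ⟨g i, hgi⟩ = g i := h1
        have h3 := hinj ⟨g i, hgi⟩ i h2
        have h4 : g i = (i : ℕ) := congrArg Fin.val h3
        omega
      · exact le_antisymm (hg i) hge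
  intro i; exact key (i : ℕ) i rfl

lemma appears_le_sInf {m : ℕ} (g : Fin m → ℕ) (hg : IsInvSeq g)
    (hne : (repeats g).Nonempty) :
    ∀ v ≤ sInf (repeats g), ∃ i : Fin m, g i = v := by
  set s := sInf (repeats g) with hs
  have hsmem : s ∈ repeats g := Nat.sInf_mem hne
  obtain ⟨i0, j0, hij, hgi0, hgj0⟩ := hsmem
  have hsm : s < m := by have := hg i0; have := i0.isLt; omega
  intro v hv
  by_contra hno
  push_neg at hno
  have hvlt : v < s := by
    rcases lt_or_eq_of_le hv with hc | hc
    · exact hc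
    · exact absurd (hc ▸ hgi0) (fun h' => (hno i0) h')
  set t : Fin (s + 1) → ℕ := fun k => g ⟨(k : ℕ), by omega⟩ with ht
  have tinj : Function.Injective t := by
    intro a b hab
    by_contra hne'
    have hidx : (⟨(a : ℕ), by omega⟩ : Fin m) ≠ ⟨(b : ℕ), by omega⟩ := by
      simp only [ne_eq, Fin.mk.injEq]
      exact fun hh => hne' (Fin.ext hh)
    have hw : t a ∈ repeats g := ⟨⟨(a : ℕ), by omega⟩, ⟨(b : ℕ), by omega⟩, hidx, rfl, hab.symm⟩
    have h1 : s ≤ t a := Nat.sInf_le hw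
    have h2 : t a ≤ (a : ℕ) := hg _
    have h3 : t b ≤ (b : ℕ) := hg _
    have ha : (a : ℕ) = s := by have := a.isLt; omega
    have hb : (b : ℕ) = s := by have := b.isLt; rw [hab] at h1; omega
    exact hne' (Fin.ext (ha.trans hb.symm))
  have hsub : Finset.image t Finset.univ ⊆ (Finset.range (s + 1)).erase v := by
    intro x hx
    rw [Finset.mem_image] at hx
    obtain ⟨k, _, rfl⟩ := hx
    rw [Finset.mem_erase, Finset.mem_range]
    refine ⟨hno _, ?_⟩
    have h2 : t k ≤ (k : ℕ) := hg _
    have := k.isLt; omega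
  have h1 : (Finset.image t Finset.univ).card = s + 1 := by
    rw [Finset.card_image_of_injective _ tinj, Finset.card_univ, Fintype.card_fin]
  have h2 := Finset.card_le_card hsub
  have h3 : ((Finset.range (s + 1)).erase v).card ≤ s := by
    rw [Finset.card_erase_of_mem (Finset.mem_range.mpr (by omega)), Finset.card_range]
    omega
  omega

theorem stmt4 (n : ℕ) (hn : 2 ≤ n) (e : Fin n → ℕ) (he : e ∈ InvSeq0012 n)
    (hne : e ≠ fun (i : Fin n) => (i : ℕ))
    (h : lastEntry e ≤ srpt (gammaSeq e)) :
    srpt e = lastEntry e := by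
  obtain ⟨hinv, _⟩ := he
  have hn1 : 0 < n := by omega
  set L : Fin n := ⟨n - 1, by omega⟩ with hL
  have hlast : lastEntry e = e L := by rw [lastEntry, dif_pos hn1]
  set ℓ := e L with hℓ
  rw [hlast]
  set γ := gammaSeq e with hγ
  have hγval : ∀ i : Fin (n - 1), γ i = e ⟨(i : ℕ), by have := i.isLt; omega⟩ := by
    intro i
    apply congrArg e
    apply Fin.ext
    rfl
  have hγinv : IsInvSeq γ := by
    intro i
    rw [hγval i]
    exact hinv _
  -- repeats of e below ℓ come from γ
  have hdown : ∀ w ∈ repeats e, w ≠ ℓ → w ∈ repeats γ := by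
    intro w hw hwℓ
    obtain ⟨i, j, hij, hi, hj⟩ := hw
    have hiL : (i : ℕ) < n - 1 := by
      have := i.isLt
      rcases Nat.lt_or_ge (i : ℕ) (n - 1) with hc | hc
      · exact hc
      · exfalso; apply hwℓ; rw [← hi]
        have : i = L := Fin.ext (show (i : ℕ) = n - 1 by omega)
        rw [this]
    have hjL : (j : ℕ) < n - 1 := by
      have := j.isLt
      rcases Nat.lt_or_ge (j : ℕ) (n - 1) with hc | hc
      · exact hc
      · exfalso; apply hwℓ; rw [← hj]
        have : j = L := Fin.ext (show (j : ℕ) = n - 1 by omega)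
        rw [this]
    refine ⟨⟨(i : ℕ), hiL⟩, ⟨(j : ℕ), hjL⟩, ?_, ?_, ?_⟩
    · simp only [ne_eq, Fin.mk.injEq]
      exact fun hh => hij (Fin.ext hh)
    · rw [hγval]; exact hi
    · rw [hγval]; exact hj
  -- ℓ appears among the first n-1 entries
  have happ : ∃ i : Fin (n - 1), γ i = ℓ := by
    by_cases hrep : (repeats γ).Nonempty
    · have hsγ : srpt γ = sInf (repeats γ) := by rw [srpt, if_pos hrep]
      exact appears_le_sInf γ hγinv hrep ℓ (by rw [← hsγ, ← hlast]; exact h)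
    · -- γ has no repeats, hence γ = id and ℓ ≤ n - 2
      have hinj : ∀ i j : Fin (n - 1), γ i = γ j → i = j := by
        intro i j hij
        by_contra hc
        exact hrep ⟨γ i, i, j, hc, rfl, hij.symm⟩
      have hid := invseq_inj_eq_id γ hγinv hinj
      have hsγ : srpt γ = n - 1 - 1 := by rw [srpt, if_neg hrep]
      have hℓle : ℓ ≤ n - 2 := by rw [← hlast]; omega
      refine ⟨⟨ℓ, by omega⟩, ?_⟩
      rw [hid ⟨ℓ, by omega⟩]
  obtain ⟨i₀, hi₀⟩ := happ
  have hmem : ℓ ∈ repeats e := by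
    refine ⟨⟨(i₀ : ℕ), by have := i₀.isLt; omega⟩, L, ?_, ?_, rfl⟩
    · simp only [ne_eq, hL, Fin.mk.injEq]
      have := i₀.isLt; omega
    · rw [← hγval i₀]; exact hi₀
  have hne' : (repeats e).Nonempty := ⟨ℓ, hmem⟩
  rw [srpt, if_pos hne']
  apply le_antisymm (Nat.sInf_le hmem)
  apply le_csInf hne'
  intro w hw
  by_contra hc
  push_neg at hc
  have hwγ : w ∈ repeats γ := hdown w hw (by omega)
  by_cases hrep : (repeats γ).Nonempty
  · have hsγ : srpt γ = sInf (repeats γ) := by rw [srpt, if_pos hrep]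
    have h1 : sInf (repeats γ) ≤ w := Nat.sInf_le hwγ
    rw [← hsγ] at h1
    rw [hlast] at h
    omega
  · exact hrep ⟨w, hwγ⟩
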